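/- arXiv:0706.4353 — 2 statements merged into one kernel-verified Lean document; each statement's English description precedes it below -/
import Mathlib

section
/- For m ≥ 2, the convex cone in ℚ^m generated over ℚ_{≥0} by the vectors u_{ij}, 1 ≤ i < j ≤ m, equals the set {(s_1,…,s_m) ∈ ℚ^m : s_i ≥ 0 for all i, and 2·s_i ≤ s_1 + ⋯ + s_m for all i}. -/
/-- The convex cone in `ℚ^m` generated over `ℚ_{≥0}` by a set `S`:
all finite nonnegative rational combinations of elements of `S`. -/
def coneGen {m : ℕ} (S : Set (Fin m → ℚ)) : Set (Fin m → ℚ) :=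
  {v | ∃ (s : Finset (Fin m → ℚ)) (c : (Fin m → ℚ) → ℚ),
    (∀ w ∈ s, 0 ≤ c w ∧ w ∈ S) ∧ v = ∑ w ∈ s, c w • w}

/-- The vector `u_{ij} ∈ ℚ^m` with entries `1` at positions `i` and `j` and `0`
elsewhere. -/
def uvec {m : ℕ} (i j : Fin m) : Fin m → ℚ := fun l => if l = i ∨ l = j then 1 else 0

lemma uvec_symm {m : ℕ} (i j : Fin m) : uvec i j = uvec j i := by
  funext l; simp [uvec, or_comm]

lemma uvec_nonneg {m : ℕ} (i j l : Fin m) : 0 ≤ uvec i j l := by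
  unfold uvec; split <;> norm_num

lemma uvec_le_one {m : ℕ} (i j l : Fin m) : uvec i j l ≤ 1 := by
  unfold uvec; split <;> norm_num

lemma sum_uvec {m : ℕ} {i j : Fin m} (h : i ≠ j) : ∑ l, uvec i j l = 2 := by
  have : ∀ l : Fin m, uvec i j l = if l ∈ ({i, j} : Finset (Fin m)) then 1 else 0 := by
    intro l; simp [uvec, Finset.mem_insert, Finset.mem_singleton]
  simp only [this, Finset.sum_ite_mem, Finset.univ_inter, Finset.sum_const, nsmul_eq_mul,
    mul_one]
  rw [Finset.card_insert_of_notMem (by simpa using h), Finset.card_singleton]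
  norm_num

lemma uvec_mem {m : ℕ} {i j : Fin m} (h : i ≠ j) :
    uvec i j ∈ {v | ∃ a b : Fin m, a < b ∧ v = uvec a b} := by
  rcases lt_or_gt_of_ne h with h' | h'
  · exact ⟨i, j, h', rfl⟩
  · exact ⟨j, i, h', (uvec_symm i j)⟩

lemma cone_zero {m : ℕ} {S : Set (Fin m → ℚ)} : (0 : Fin m → ℚ) ∈ coneGen S :=
  ⟨∅, fun _ => 0, by simp, by simp⟩

lemma cone_add {m : ℕ} {S : Set (Fin m → ℚ)} {u v : Fin m → ℚ}
    (hu : u ∈ coneGen S) (hv : v ∈ coneGen S) : u + v ∈ coneGen S := by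
  classical
  obtain ⟨s₁, c₁, h₁, rfl⟩ := hu
  obtain ⟨s₂, c₂, h₂, rfl⟩ := hv
  refine ⟨s₁ ∪ s₂, fun w => (if w ∈ s₁ then c₁ w else 0) + (if w ∈ s₂ then c₂ w else 0),
    ?_, ?_⟩
  · intro w hw
    refine ⟨add_nonneg ?_ ?_, ?_⟩
    · split
      · exact (h₁ w ‹_›).1
      · exact le_refl 0
    · split
      · exact (h₂ w ‹_›).1
      · exact le_refl 0
    · rcases Finset.mem_union.mp hw with h | h
      · exact (h₁ w h).2
      · exact (h₂ w h).2
  · simp only [add_smul]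
    rw [Finset.sum_add_distrib]
    congr 1
    · rw [← Finset.sum_subset Finset.subset_union_left
        (fun w _ hw => by rw [if_neg hw, zero_smul])]
      exact Finset.sum_congr rfl fun w hw => by rw [if_pos hw]
    · rw [← Finset.sum_subset Finset.subset_union_right
        (fun w _ hw => by rw [if_neg hw, zero_smul])]
      exact Finset.sum_congr rfl fun w hw => by rw [if_pos hw]

lemma cone_smul {m : ℕ} {S : Set (Fin m → ℚ)} {c : ℚ} {w : Fin m → ℚ} (hc : 0 ≤ c)
    (hw : w ∈ S) : c • w ∈ coneGen S :=
  ⟨{w}, fun _ => c, by simp [hc, hw], by simp⟩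

lemma cone_sum {m : ℕ} {S : Set (Fin m → ℚ)} {ι : Type*} (t : Finset ι) (f : ι → Fin m → ℚ)
    (h : ∀ x ∈ t, f x ∈ coneGen S) : ∑ x ∈ t, f x ∈ coneGen S := by
  classical
  induction t using Finset.induction_on with
  | empty => simpa using (cone_zero : (0 : Fin m → ℚ) ∈ coneGen S)
  | insert _ _ hx ih =>
    rw [Finset.sum_insert hx]
    exact cone_add (h _ (Finset.mem_insert_self _ _))
      (ih fun x hx => h x (Finset.mem_insert_of_mem hx))

lemma cone_tight {m : ℕ} (s : Fin m → ℚ) (i : Fin m) (h0 : ∀ l, 0 ≤ s l)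
    (ht : 2 * s i = ∑ l, s l) :
    s ∈ coneGen {v | ∃ a b : Fin m, a < b ∧ v = uvec a b} := by
  classical
  have key : s = ∑ l ∈ Finset.univ.erase i, s l • uvec i l := by
    funext k
    rw [Finset.sum_apply]
    simp only [Pi.smul_apply, smul_eq_mul]
    by_cases hk : k = i
    · subst hk
      have h1 : ∀ l ∈ Finset.univ.erase k, s l * uvec k l k = s l := by
        intro l _
        simp [uvec]
      rw [Finset.sum_congr rfl h1]
      have := Finset.sum_erase_add Finset.univ s (Finset.mem_univ k)
      linarith [ht, this]
    · have h1 : ∀ l ∈ Finset.univ.erase i, s l * uvec i l k = if l = k then s k else 0 := by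
        intro l hl
        by_cases hlk : l = k
        · subst hlk; simp [uvec, hk]
        · simp [uvec, hk, hlk, Ne.symm hlk]
      rw [Finset.sum_congr rfl h1, Finset.sum_ite_eq' (Finset.univ.erase i) k]
      simp [Finset.mem_erase, hk]
  rw [key]
  refine cone_sum _ _ fun l hl => ?_
  have hli : l ≠ i := (Finset.mem_erase.mp hl).1
  exact cone_smul (h0 l) (uvec_mem (Ne.symm hli))

lemma cone_step {m n : ℕ}
    (ih : ∀ s : Fin m → ℚ, (Finset.univ.filter (fun k => s k ≠ 0)).card ≤ n →
      (∀ i, 0 ≤ s i) → (∀ i, 2 * s i ≤ ∑ l, s l) →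
      s ∈ coneGen {v | ∃ a b : Fin m, a < b ∧ v = uvec a b})
    (s : Fin m → ℚ) (i j : Fin m) (hij : i ≠ j) (hji : s j ≤ s i) (hjpos : 0 < s j)
    (hcard : (Finset.univ.filter (fun k => s k ≠ 0)).card ≤ n + 1)
    (h0 : ∀ k, 0 ≤ s k) (hc : ∀ k, 2 * s k ≤ ∑ l, s l) :
    s ∈ coneGen {v | ∃ a b : Fin m, a < b ∧ v = uvec a b} := by
  classical
  set T := ∑ l, s l with hT
  set M : Finset ℚ :=
    insert (s j) (((Finset.univ.erase i).erase j).image (fun k => (T - 2 * s k) / 2)) with hM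
  have hMne : M.Nonempty := ⟨s j, Finset.mem_insert_self _ _⟩
  set t := M.min' hMne with htdef
  have ht_le_sj : t ≤ s j := Finset.min'_le _ _ (Finset.mem_insert_self _ _)
  have ht_slack : ∀ k, k ≠ i → k ≠ j → t ≤ (T - 2 * s k) / 2 := by
    intro k hki hkj
    refine Finset.min'_le _ _ (Finset.mem_insert_of_mem ?_)
    exact Finset.mem_image_of_mem _ (by simp [hki, hkj])
  have hmm : t ∈ M := Finset.min'_mem M hMne
  have ht0 : 0 ≤ t := by
    rcases Finset.mem_insert.mp hmm with h | h
    · rw [h]; exact h0 j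
    · obtain ⟨k, _, hk⟩ := Finset.mem_image.mp h
      have := hc k
      rw [← hk]
      linarith
  set s' : Fin m → ℚ := fun k => s k - t * uvec i j k with hs'
  have huii : uvec i j i = 1 := by simp [uvec]
  have huij : uvec i j j = 1 := by simp [uvec]
  have huik : ∀ k, k ≠ i → k ≠ j → uvec i j k = 0 := fun k hki hkj => by
    simp [uvec, hki, hkj]
  have h0' : ∀ k, 0 ≤ s' k := by
    intro k
    simp only [hs']
    by_cases hki : k = i
    · subst hki; rw [huii]; linarith
    · by_cases hkj : k = j
      · subst hkj; rw [huij]; linarith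
      · rw [huik k hki hkj]; linarith [h0 k]
  have hsum' : ∑ l, s' l = T - 2 * t := by
    simp only [hs']
    rw [Finset.sum_sub_distrib, ← Finset.mul_sum, sum_uvec hij, ← hT]
    ring
  have hc' : ∀ k, 2 * s' k ≤ ∑ l, s' l := by
    intro k
    rw [hsum']
    simp only [hs']
    by_cases hki : k = i
    · subst hki; rw [huii]; linarith [hc k]
    · by_cases hkj : k = j
      · subst hkj; rw [huij]; linarith [hc k]
      · rw [huik k hki hkj]
        have := ht_slack k hki hkj
        linarith
  have hdecomp : s = s' + t • uvec i j := by
    funext k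
    simp only [hs', Pi.add_apply, Pi.smul_apply, smul_eq_mul]
    ring
  have hmem' : s' ∈ coneGen {v | ∃ a b : Fin m, a < b ∧ v = uvec a b} := by
    rcases Finset.mem_insert.mp hmm with h | h
    · -- t = s j : support decreases
      have hs'j : s' j = 0 := by simp only [hs', huij]; rw [← h]; ring
      have hsub : (Finset.univ.filter (fun k => s' k ≠ 0)) ⊆
          (Finset.univ.filter (fun k => s k ≠ 0)).erase j := by
        intro k hk
        rw [Finset.mem_filter] at hk
        rw [Finset.mem_erase, Finset.mem_filter]
        have hkj : k ≠ j := fun hkj => hk.2 (hkj ▸ hs'j)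
        refine ⟨hkj, Finset.mem_univ k, ?_⟩
        by_cases hki : k = i
        · subst hki; intro h'; rw [h'] at hji; linarith
        · intro h'
          apply hk.2
          simp only [hs', huik k hki hkj, h']
          ring
      have hjmem : j ∈ Finset.univ.filter (fun k => s k ≠ 0) := by
        simp [Finset.mem_filter, ne_of_gt hjpos]
      have hcard' : (Finset.univ.filter (fun k => s' k ≠ 0)).card ≤ n := by
        calc (Finset.univ.filter (fun k => s' k ≠ 0)).card
            ≤ ((Finset.univ.filter (fun k => s k ≠ 0)).erase j).card :=
              Finset.card_le_card hsub
          _ = (Finset.univ.filter (fun k => s k ≠ 0)).card - 1 :=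
              Finset.card_erase_of_mem hjmem
          _ ≤ n := by omega
      exact ih s' hcard' h0' hc'
    · -- t is a slack : tight case
      obtain ⟨k0, hk0mem, hk0⟩ := Finset.mem_image.mp h
      rw [Finset.mem_erase, Finset.mem_erase] at hk0mem
      have hk0j : k0 ≠ j := hk0mem.1
      have hk0i : k0 ≠ i := hk0mem.2.1
      refine cone_tight s' k0 h0' ?_
      rw [hsum']
      simp only [hs', huik k0 hk0i hk0j]
      linarith [hk0]
  rw [hdecomp]
  exact cone_add hmem' (cone_smul ht0 (uvec_mem hij))

lemma cone_main {m : ℕ} (n : ℕ) :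
    ∀ s : Fin m → ℚ, (Finset.univ.filter (fun k => s k ≠ 0)).card ≤ n →
      (∀ i, 0 ≤ s i) → (∀ i, 2 * s i ≤ ∑ l, s l) →
      s ∈ coneGen {v | ∃ a b : Fin m, a < b ∧ v = uvec a b} := by
  classical
  induction n with
  | zero =>
    intro s hcard _ _
    have : s = 0 := by
      funext k
      by_contra hk
      rw [Pi.zero_apply] at hk
      have : k ∈ Finset.univ.filter (fun k => s k ≠ 0) := by simp [hk]
      have := Finset.card_pos.mpr ⟨k, this⟩
      omega
    rw [this]; exact cone_zero
  | succ n ih =>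
    intro s hcard h0 hc
    by_cases hz : s = 0
    · rw [hz]; exact cone_zero
    · obtain ⟨a, ha⟩ := Function.ne_iff.mp hz
      have hapos : 0 < s a := lt_of_le_of_ne (h0 a) (Ne.symm ha)
      have hb : ∃ b, b ≠ a ∧ 0 < s b := by
        by_contra hball
        push_neg at hball
        have hzb : ∀ b ∈ Finset.univ, b ≠ a → s b = 0 := fun b _ hba =>
          le_antisymm (hball b hba) (h0 b)
        have hsum : ∑ l, s l = s a :=
          Finset.sum_eq_single a hzb (fun h => absurd (Finset.mem_univ a) h)
        have := hc a
        rw [hsum] at this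
        linarith
      obtain ⟨b, hba, hbpos⟩ := hb
      rcases le_total (s b) (s a) with hle | hle
      · exact cone_step ih s a b (Ne.symm hba) hle hbpos hcard h0 hc
      · exact cone_step ih s b a hba hle hapos hcard h0 hc

/-- For `m ≥ 2`, the convex cone in `ℚ^m` generated over `ℚ_{≥0}` by the vectors
`u_{ij}`, `1 ≤ i < j ≤ m`, equals
`{s ∈ ℚ^m : s_i ≥ 0 for all i, and 2 s_i ≤ s_1 + ⋯ + s_m for all i}`. -/
theorem coneGen_uvec_eq
    {m : ℕ} (hm : 2 ≤ m) :
    coneGen {v | ∃ i j : Fin m, i < j ∧ v = uvec i j} =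
      {s | (∀ i, 0 ≤ s i) ∧ ∀ i, 2 * s i ≤ ∑ l, s l} := by
  apply Set.Subset.antisymm
  · rintro v ⟨fs, c, hcs, rfl⟩
    have hw1 : ∀ w ∈ fs, ∀ k, 0 ≤ w k := by
      intro w hw k
      obtain ⟨i, j, _, rfl⟩ := (hcs w hw).2
      exact uvec_nonneg i j k
    have hw2 : ∀ w ∈ fs, ∀ k, w k ≤ 1 := by
      intro w hw k
      obtain ⟨i, j, _, rfl⟩ := (hcs w hw).2
      exact uvec_le_one i j k
    have hwsum : ∀ w ∈ fs, ∑ l, w l = 2 := by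
      intro w hw
      obtain ⟨i, j, hij, rfl⟩ := (hcs w hw).2
      exact sum_uvec (ne_of_lt hij)
    constructor
    · intro k
      rw [Finset.sum_apply]
      exact Finset.sum_nonneg fun w hw =>
        mul_nonneg (hcs w hw).1 (hw1 w hw k)
    · intro k
      have hR : ∑ l, (∑ w ∈ fs, c w • w) l = ∑ w ∈ fs, c w * 2 := by
        simp only [Finset.sum_apply, Pi.smul_apply, smul_eq_mul]
        rw [Finset.sum_comm]
        exact Finset.sum_congr rfl fun w hw => by
          rw [← Finset.mul_sum, hwsum w hw]
      rw [hR, Finset.sum_apply, Finset.mul_sum]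
      refine Finset.sum_le_sum fun w hw => ?_
      have h1 := (hcs w hw).1
      have h2 := hw2 w hw k
      have h3 := hw1 w hw k
      simp only [Pi.smul_apply, smul_eq_mul]
      nlinarith
  · rintro s ⟨h0, hc⟩
    exact cone_main (Finset.univ.filter (fun k => s k ≠ 0)).card s (le_refl _) h0 hc
end

section
/- For integers 1 ≤ n ≤ m, the convex cone in ℚ^m generated over ℚ_{≥0} by the indicator vectors e_S := Σ_{i∈S} e_i of all n-element subsets S ⊆ {1,…,m} equals the set {(s_1,…,s_m) ∈ ℚ^m : s_j ≥ 0 for all j, and n·s_j ≤ s_1 + ⋯ + s_m for all j}. -/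
lemma coneGen_zero_mem {m : ℕ} (S : Set (Fin m → ℚ)) : (0 : Fin m → ℚ) ∈ coneGen S :=
  ⟨∅, 0, by simp, by simp⟩

lemma coneGen_smul_mem {m : ℕ} {S : Set (Fin m → ℚ)} {w : Fin m → ℚ} (hw : w ∈ S)
    {t : ℚ} (ht : 0 ≤ t) : t • w ∈ coneGen S :=
  ⟨{w}, fun _ => t, by simp [hw, ht], by simp⟩

lemma coneGen_add_mem {m : ℕ} {S : Set (Fin m → ℚ)} {v₁ v₂ : Fin m → ℚ}
    (h₁ : v₁ ∈ coneGen S) (h₂ : v₂ ∈ coneGen S) : v₁ + v₂ ∈ coneGen S := by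
  obtain ⟨s₁, c₁, hc₁, rfl⟩ := h₁
  obtain ⟨s₂, c₂, hc₂, rfl⟩ := h₂
  refine ⟨s₁ ∪ s₂, fun w => (if w ∈ s₁ then c₁ w else 0) + (if w ∈ s₂ then c₂ w else 0), ?_, ?_⟩
  · intro w hw
    constructor
    · have h1 : 0 ≤ (if w ∈ s₁ then c₁ w else 0) := by
        split
        · exact (hc₁ w ‹_›).1
        · exact le_refl 0
      have h2 : 0 ≤ (if w ∈ s₂ then c₂ w else 0) := by
        split
        · exact (hc₂ w ‹_›).1
        · exact le_refl 0
      exact add_nonneg h1 h2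
    · rcases Finset.mem_union.1 hw with h | h
      · exact (hc₁ w h).2
      · exact (hc₂ w h).2
  · have e1 : ∀ (s' : Finset (Fin m → ℚ)) (c : (Fin m → ℚ) → ℚ),
        ∑ w ∈ s₁ ∪ s₂, (if w ∈ s' then c w else 0) • w
          = ∑ w ∈ (s₁ ∪ s₂) ∩ s', c w • w := by
      intro s' c
      rw [← Finset.sum_ite_mem]
      congr 1
      ext w
      split <;> simp [*]
    simp only [add_smul, Finset.sum_add_distrib, e1,
      Finset.union_inter_cancel_left, Finset.union_inter_cancel_right]

lemma sum_indicator {m : ℕ} (S : Finset (Fin m)) :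
    ∑ l, (if l ∈ S then (1:ℚ) else 0) = S.card := by
  rw [Finset.sum_ite_mem, Finset.univ_inter, Finset.sum_const, nsmul_eq_mul, mul_one]

lemma key {m n : ℕ} (hn : 1 ≤ n) (hnm : n ≤ m) :
    ∀ c : ℕ, ∀ s : Fin m → ℚ,
      (Finset.univ.filter (fun j => s j ≠ 0 ∧ (n:ℚ) * s j ≠ ∑ l, s l)).card = c →
      (∀ j, 0 ≤ s j) → (∀ j, (n:ℚ) * s j ≤ ∑ l, s l) →
      s ∈ coneGen {v : Fin m → ℚ | ∃ S : Finset (Fin m), S.card = n ∧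
          v = fun i => if i ∈ S then 1 else 0} := by
  intro c
  induction c using Nat.strong_induction_on with
  | _ c ih =>
  intro s hc h0 h1
  by_cases hT : ∑ l, s l = 0
  · have hs0 : s = 0 := by
      funext j
      have := (Finset.sum_eq_zero_iff_of_nonneg (fun i _ => h0 i)).1 hT j (Finset.mem_univ j)
      simpa using this
    rw [hs0]; exact coneGen_zero_mem _
  · set T := ∑ l, s l with hTdef
    have hT0 : 0 < T := lt_of_le_of_ne (Finset.sum_nonneg fun i _ => h0 i) (Ne.symm hT)
    have hnQ : (0:ℚ) < n := by exact_mod_cast hn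
    set tight := Finset.univ.filter (fun j => (n:ℚ) * s j = T) with htight
    set supp := Finset.univ.filter (fun j => s j ≠ 0) with hsupp
    have htsub : tight ⊆ supp := by
      intro j hj
      simp only [htight, hsupp, Finset.mem_filter, Finset.mem_univ, true_and] at hj ⊢
      intro h
      rw [h, mul_zero] at hj
      exact hT hj.symm
    have htight_card : tight.card ≤ n := by
      have h2 : ∑ j ∈ tight, (n:ℚ) * s j = (tight.card : ℚ) * T := by
        rw [Finset.sum_congr rfl (fun j hj => (Finset.mem_filter.1 hj).2),
          Finset.sum_const, nsmul_eq_mul]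
      have h3 : ∑ j ∈ tight, s j ≤ T :=
        Finset.sum_le_sum_of_subset_of_nonneg (Finset.subset_univ _) (fun i _ _ => h0 i)
      have h4 : (tight.card : ℚ) * T ≤ (n:ℚ) * T := by
        rw [← h2, ← Finset.mul_sum]
        exact mul_le_mul_of_nonneg_left h3 hnQ.le
      have := (mul_le_mul_iff_of_pos_right hT0).1 h4
      exact_mod_cast this
    have hsupp_card : n ≤ supp.card := by
      have h2 : T = ∑ j ∈ supp, s j := by
        rw [hsupp, Finset.sum_filter_ne_zero]
      have h3 : ∑ j ∈ supp, s j ≤ ∑ j ∈ supp, T / n :=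
        Finset.sum_le_sum fun j _ => (le_div_iff₀' hnQ).2 (h1 j)
      have h4 : (n:ℚ) * T ≤ (supp.card : ℚ) * T := by
        have h5 : T ≤ (supp.card : ℚ) * (T / n) := by
          calc T = ∑ j ∈ supp, s j := h2
            _ ≤ ∑ j ∈ supp, T / n := h3
            _ = (supp.card : ℚ) * (T / n) := by rw [Finset.sum_const, nsmul_eq_mul]
        calc (n:ℚ) * T ≤ n * ((supp.card : ℚ) * (T / n)) :=
              mul_le_mul_of_nonneg_left h5 hnQ.le
          _ = (supp.card : ℚ) * T := by field_simp
      have := (mul_le_mul_iff_of_pos_right hT0).1 h4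
      exact_mod_cast this
    obtain ⟨S, htS, hSsupp, hScard'⟩ :=
      Finset.exists_subsuperset_card_eq (n := n - tight.card + tight.card) htsub (by omega) (by omega)
    have hScard : S.card = n := by rw [hScard']; omega
    have hSpos : ∀ j ∈ S, 0 < s j := by
      intro j hj
      have := (Finset.mem_filter.1 (hSsupp hj)).2
      exact lt_of_le_of_ne (h0 j) (Ne.symm this)
    have hne : (Finset.univ : Finset (Fin m)).Nonempty :=
      ⟨⟨0, lt_of_lt_of_le hn hnm⟩, Finset.mem_univ _⟩
    set f : Fin m → ℚ := fun j => if j ∈ S then s j else T / n - s j with hf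
    set t := Finset.univ.inf' hne f with ht
    have hfval : ∀ j, f j = if j ∈ S then s j else T / n - s j := fun j => rfl
    have htle : ∀ j, t ≤ f j := fun j => Finset.inf'_le _ (Finset.mem_univ j)
    have htleS : ∀ j ∈ S, t ≤ s j := fun j hj => by
      have := htle j; rwa [hfval j, if_pos hj] at this
    have htleN : ∀ j ∉ S, t ≤ T / n - s j := fun j hj => by
      have := htle j; rwa [hfval j, if_neg hj] at this
    obtain ⟨j0, -, hj0⟩ := Finset.exists_mem_eq_inf' hne f
    have hj0val : t = if j0 ∈ S then s j0 else T / n - s j0 := by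
      rw [ht, hj0, hfval j0]
    have hfpos : ∀ j, 0 < f j := by
      intro j
      rw [hfval j]
      split
      · exact hSpos j ‹_›
      · rename_i hj
        have hjnt : j ∉ tight := fun h => hj (htS h)
        have hne2 : (n:ℚ) * s j ≠ T := by
          intro h
          exact hjnt (by rw [htight]; exact Finset.mem_filter.2 ⟨Finset.mem_univ _, h⟩)
        have hlt : (n:ℚ) * s j < T := lt_of_le_of_ne (h1 j) hne2
        have h6 : s j < T / n := (lt_div_iff₀' hnQ).2 hlt
        linarith
    have htpos : 0 < t := by
      rw [ht, Finset.lt_inf'_iff]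
      exact fun j _ => hfpos j
    set e : Fin m → ℚ := fun i => if i ∈ S then 1 else 0 with he
    have heval : ∀ j, e j = if j ∈ S then 1 else 0 := fun j => rfl
    have heS : ∀ j ∈ S, e j = 1 := fun j hj => by rw [heval j, if_pos hj]
    have heN : ∀ j ∉ S, e j = 0 := fun j hj => by rw [heval j, if_neg hj]
    set s' : Fin m → ℚ := fun j => s j - t * e j with hs'
    have hs'val : ∀ j, s' j = s j - t * e j := fun j => rfl
    have hsum_e : ∑ l, e l = n := by
      simp only [heval]
      rw [sum_indicator, hScard]
    have hT' : ∑ l, s' l = T - n * t := by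
      simp only [hs'val]
      rw [Finset.sum_sub_distrib, ← Finset.mul_sum, hsum_e, ← hTdef]
      ring
    have h0' : ∀ j, 0 ≤ s' j := by
      intro j
      rw [hs'val j]
      by_cases hj : j ∈ S
      · rw [heS j hj]
        linarith [htleS j hj]
      · rw [heN j hj]
        linarith [h0 j]
    have h1' : ∀ j, (n:ℚ) * s' j ≤ ∑ l, s' l := by
      intro j
      rw [hT', hs'val j]
      by_cases hj : j ∈ S
      · rw [heS j hj]
        have hexp : (n:ℚ) * (s j - t * 1) = n * s j - n * t := by ring
        rw [hexp]
        linarith [h1 j]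
      · rw [heN j hj]
        have h5 : (n:ℚ) * t ≤ n * (T / n - s j) :=
          mul_le_mul_of_nonneg_left (htleN j hj) hnQ.le
        have h6 : (n:ℚ) * (T / n - s j) = T - n * s j := by field_simp
        have hexp : (n:ℚ) * (s j - t * 0) = n * s j := by ring
        rw [hexp]
        linarith
    by_cases hT'0 : ∑ l, s' l = 0
    · have hs'0 : ∀ j, s' j = 0 := by
        intro j
        have := (Finset.sum_eq_zero_iff_of_nonneg (fun i _ => h0' i)).1 hT'0 j (Finset.mem_univ j)
        simpa using this
      have hse : s = t • e := by
        funext j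
        have h := hs'0 j
        rw [hs'val j] at h
        simp only [Pi.smul_apply, smul_eq_mul]
        linarith
      rw [hse]
      refine coneGen_smul_mem ?_ htpos.le
      exact ⟨S, hScard, he⟩
    · have hj0free : j0 ∈ Finset.univ.filter (fun j => s j ≠ 0 ∧ (n:ℚ) * s j ≠ T) := by
        simp only [Finset.mem_filter, Finset.mem_univ, true_and]
        by_cases hj : j0 ∈ S
        · have ht_eq : t = s j0 := by rw [hj0val, if_pos hj]
          constructor
          · rw [← ht_eq]; exact htpos.ne'
          · intro htt
            apply hT'0
            rw [hT', ht_eq]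
            linarith
        · have ht_eq : t = T / n - s j0 := by rw [hj0val, if_neg hj]
          constructor
          · intro h0j
            apply hT'0
            rw [hT', ht_eq, h0j]
            field_simp
            ring
          · intro htt
            exact hj (htS (by rw [htight]; exact Finset.mem_filter.2 ⟨Finset.mem_univ _, htt⟩))
      have hfree_sub : Finset.univ.filter (fun j => s' j ≠ 0 ∧ (n:ℚ) * s' j ≠ ∑ l, s' l)
          ⊆ (Finset.univ.filter (fun j => s j ≠ 0 ∧ (n:ℚ) * s j ≠ T)).erase j0 := by
        intro j hj
        simp only [Finset.mem_filter, Finset.mem_univ, true_and] at hj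
        rw [Finset.mem_erase]
        constructor
        · rintro rfl
          by_cases hjS : j ∈ S
          · have ht_eq : t = s j := by rw [hj0val, if_pos hjS]
            apply hj.1
            rw [hs'val j, heS j hjS, ht_eq]
            ring
          · have ht_eq : t = T / n - s j := by rw [hj0val, if_neg hjS]
            apply hj.2
            rw [hs'val j, heN j hjS, hT', ht_eq]
            field_simp
            ring
        · simp only [Finset.mem_filter, Finset.mem_univ, true_and]
          by_contra hcon
          push_neg at hcon
          by_cases hz : s j = 0
          · have hjS : j ∉ S := fun h => (hSpos j h).ne' hz
            apply hj.1
            rw [hs'val j, heN j hjS, hz]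
            ring
          · have htt : (n:ℚ) * s j = T := hcon hz
            have hjS : j ∈ S :=
              htS (by rw [htight]; exact Finset.mem_filter.2 ⟨Finset.mem_univ _, htt⟩)
            apply hj.2
            rw [hs'val j, heS j hjS, hT']
            have hexp : (n:ℚ) * (s j - t * 1) = n * s j - n * t := by ring
            rw [hexp, htt]
      have hcard' : (Finset.univ.filter
          (fun j => s' j ≠ 0 ∧ (n:ℚ) * s' j ≠ ∑ l, s' l)).card < c := by
        have h5 := Finset.card_le_card hfree_sub
        have h6 := Finset.card_erase_of_mem hj0free
        have h7 : 1 ≤ (Finset.univ.filter (fun j => s j ≠ 0 ∧ (n:ℚ) * s j ≠ T)).card :=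
          Finset.card_pos.2 ⟨j0, hj0free⟩
        omega
      have hs'mem := ih _ hcard' s' rfl h0' h1'
      have hsplit : s = s' + t • e := by
        funext j
        simp only [Pi.add_apply, Pi.smul_apply, smul_eq_mul, hs'val j]
        ring
      rw [hsplit]
      refine coneGen_add_mem hs'mem (coneGen_smul_mem ?_ htpos.le)
      exact ⟨S, hScard, he⟩

/-- For `1 ≤ n ≤ m`, the convex cone in `ℚ^m` generated over `ℚ_{≥0}` by the
indicator vectors `e_S` of all `n`-element subsets `S ⊆ {1,…,m}` equals
`{s ∈ ℚ^m : s_j ≥ 0 for all j, and n·s_j ≤ s_1 + ⋯ + s_m for all j}`. -/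
theorem coneGen_indicators_eq
    {m n : ℕ} (hn : 1 ≤ n) (hnm : n ≤ m) :
    coneGen {v : Fin m → ℚ | ∃ S : Finset (Fin m), S.card = n ∧
        v = fun i => if i ∈ S then 1 else 0} =
      {s | (∀ j, 0 ≤ s j) ∧ ∀ j, (n : ℚ) * s j ≤ ∑ l, s l} := by
  ext s
  constructor
  · rintro ⟨fs, c, hc, rfl⟩
    have hrw : ∀ l, (∑ w ∈ fs, c w • w) l = ∑ w ∈ fs, c w * w l := by
      intro l
      rw [Finset.sum_apply]
      simp
    have hwj0 : ∀ w ∈ fs, ∀ j, 0 ≤ w j := by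
      intro w hw j
      obtain ⟨Sw, hcard, hweq⟩ := (hc w hw).2
      rw [hweq]
      dsimp only
      split <;> norm_num
    constructor
    · intro j
      rw [hrw j]
      exact Finset.sum_nonneg fun w hw => mul_nonneg (hc w hw).1 (hwj0 w hw j)
    · intro j
      have hR : ∑ l, (∑ w ∈ fs, c w • w) l = ∑ w ∈ fs, c w * ∑ l, w l := by
        simp only [hrw]
        rw [Finset.sum_comm]
        simp [Finset.mul_sum]
      rw [hR, hrw j, Finset.mul_sum]
      apply Finset.sum_le_sum
      intro w hw
      obtain ⟨Sw, hcard, hweq⟩ := (hc w hw).2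
      have h1w : w j ≤ 1 := by
        rw [hweq]; dsimp only; split <;> norm_num
      have h2w : ∑ l, w l = n := by
        simp only [hweq]
        rw [sum_indicator, hcard]
      rw [h2w]
      have hnn : (0:ℚ) ≤ n := Nat.cast_nonneg n
      have hb : (n:ℚ) * (c w * w j) ≤ n * (c w * 1) :=
        mul_le_mul_of_nonneg_left (mul_le_mul_of_nonneg_left h1w (hc w hw).1) hnn
      linarith
  · rintro ⟨h0, h1⟩
    exact key hn hnm _ s rfl h0 h1
end
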